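/- arXiv:1909.09308 — 2 statements merged into one kernel-verified Lean document; each statement's English description precedes it below -/
import Mathlib

section
/- For B(u) = γ(x)|u+w⁰|(u+w⁰) with γ = r/h, 0 < λ ≤ h, one has the coercivity-type lower bound (B(u), u)_{L²} ≥ −(r/(2λ))(‖w⁰‖_{L⁴}⁴ + ‖u‖_{L²}²) for all u, w⁰ ∈ L⁴(Ω;ℝ²) with u ∈ L²(Ω;ℝ²). -/
open MeasureTheory
open scoped RealInnerProductSpace ENNReal

private lemma tidal_pointwise {E : Type*} [NormedAddCommGroup E] [InnerProductSpace ℝ E]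
    (gx r lam : ℝ) (hg0 : 0 ≤ gx) (hgle : gx ≤ r / lam)
    (u w : E) :
    -(r / (2 * lam)) * (‖w‖ ^ 4 + ‖u‖ ^ 2) ≤ gx * ‖u + w‖ * ⟪u + w, u⟫ := by
  set a := ‖u + w‖ with ha
  set b := ‖w‖ with hb
  set c := ‖u‖ with hc
  have ha0 : 0 ≤ a := norm_nonneg _
  have hb0 : 0 ≤ b := norm_nonneg _
  have hc0 : 0 ≤ c := norm_nonneg _
  have h1 : a ^ 2 - a * b ≤ ⟪u + w, u⟫ := by
    have : ⟪u + w, u⟫ = ⟪u + w, u + w⟫ - ⟪u + w, w⟫ := by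
      rw [inner_add_right]; ring
    rw [this, real_inner_self_eq_norm_sq]
    have := real_inner_le_norm (u + w) w
    nlinarith
  have hcge : b - a ≤ c := by
    have h := abs_norm_sub_norm_le (u + w) w
    rw [add_sub_cancel_right] at h
    have := neg_abs_le (‖u + w‖ - ‖w‖)
    simp only [← ha, ← hb, ← hc] at *
    linarith
  have h2 : -((b ^ 4 + c ^ 2) / 2) ≤ a ^ 2 * (a - b) := by
    rcases le_or_gt b a with hba | hba
    · nlinarith [sq_nonneg a, sq_nonneg b, sq_nonneg c]
    · nlinarith [sq_nonneg (b ^ 2 - c),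
        mul_nonneg (mul_nonneg (add_nonneg hb0 ha0) (sub_pos.mpr hba).le) (sub_pos.mpr hba).le,
        mul_nonneg (mul_nonneg hb0 hb0) (by linarith : (0:ℝ) ≤ c - (b - a))]
  have h3 : gx * (a ^ 2 * (a - b)) ≤ gx * a * ⟪u + w, u⟫ := by
    have := mul_le_mul_of_nonneg_left h1 (mul_nonneg hg0 ha0)
    nlinarith
  have h4 : gx * (-((b ^ 4 + c ^ 2) / 2)) ≤ gx * (a ^ 2 * (a - b)) :=
    mul_le_mul_of_nonneg_left h2 hg0
  have h5 : -(r / (2 * lam)) * (b ^ 4 + c ^ 2) ≤ gx * (-((b ^ 4 + c ^ 2) / 2)) := by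
    have hnn : 0 ≤ b ^ 4 + c ^ 2 := by positivity
    have : gx * (b ^ 4 + c ^ 2) ≤ (r / lam) * (b ^ 4 + c ^ 2) :=
      mul_le_mul_of_nonneg_right hgle hnn
    have hrl : r / (2 * lam) = (r / lam) / 2 := by ring
    nlinarith
  linarith

/-- Coercivity-type lower bound for the tidal nonlinearity `B(u) = γ(x)|u+w⁰|(u+w⁰)`,
`γ = r/h`, `0 < λ ≤ h`:
`(B(u), u)_{L²} ≥ −(r/(2λ))(‖w⁰‖_{L⁴}⁴ + ‖u‖_{L²}²)`. -/
theorem tidal_B_coercive_lower_bound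
    {Ω : Type*} [MeasureSpace Ω]
    (lam r : ℝ) (hlam : 0 < lam) (hr : 0 < r)
    (h : Ω → ℝ) (hh : ∀ x, lam ≤ h x)
    (γ : Ω → ℝ) (hγ : ∀ x, γ x = r / h x)
    (u w0 : Ω → EuclideanSpace ℝ (Fin 2))
    (hu4 : MemLp u 4) (hu2 : MemLp u 2) (hw : MemLp w0 4)
    (B : (Ω → EuclideanSpace ℝ (Fin 2)) → Ω → EuclideanSpace ℝ (Fin 2))
    (hB : ∀ z x, B z x = (γ x * ‖z x + w0 x‖) • (z x + w0 x)) :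
    -(r / (2 * lam)) *
        (((∫ x, ‖w0 x‖ ^ 4) ^ ((1:ℝ)/4)) ^ 4 + ((∫ x, ‖u x‖ ^ 2) ^ ((1:ℝ)/2)) ^ 2)
      ≤ ∫ x, ⟪B u x, u x⟫ := by
  -- γ bounds
  have hhx : ∀ x, 0 < h x := fun x => lt_of_lt_of_le hlam (hh x)
  have hγ0 : ∀ x, 0 ≤ γ x := fun x => by rw [hγ x]; exact div_nonneg hr.le (hhx x).le
  have hγle : ∀ x, γ x ≤ r / lam := fun x => by
    rw [hγ x]; gcongr; exact hh x
  -- integrability of the comparison functions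
  have hw4 : Integrable (fun x => ‖w0 x‖ ^ 4) (volume : Measure Ω) := by
    have h' := hw.integrable_norm_rpow (by norm_num) (by norm_num)
    have he : (fun x => ‖w0 x‖ ^ (4 : ℝ≥0∞).toReal) = fun x => ‖w0 x‖ ^ (4:ℕ) := by
      funext x
      rw [show (4 : ℝ≥0∞).toReal = ((4:ℕ):ℝ) by norm_num, Real.rpow_natCast]
    rwa [he] at h'
  have hu2' : Integrable (fun x => ‖u x‖ ^ 2) (volume : Measure Ω) := by
    have h' := hu2.integrable_norm_rpow (by norm_num) (by norm_num)
    have he : (fun x => ‖u x‖ ^ (2 : ℝ≥0∞).toReal) = fun x => ‖u x‖ ^ (2:ℕ) := by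
      funext x
      rw [show (2 : ℝ≥0∞).toReal = ((2:ℕ):ℝ) by norm_num, Real.rpow_natCast]
    rwa [he] at h'
  set g : Ω → ℝ := fun x => -(r / (2 * lam)) * (‖w0 x‖ ^ 4 + ‖u x‖ ^ 2) with hg
  have hgint : Integrable g := (hw4.add hu2').const_mul _
  -- pointwise bound
  have hpt : ∀ x, g x ≤ ⟪B u x, u x⟫ := by
    intro x
    rw [hB u x, real_inner_smul_left]
    have := tidal_pointwise (γ x) r lam (hγ0 x) (hγle x) (u x) (w0 x)
    simpa [hg, mul_assoc, neg_mul] using this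
  -- rewrite LHS as ∫ g
  have hw4nn : 0 ≤ ∫ x, ‖w0 x‖ ^ 4 := integral_nonneg fun x => by positivity
  have hu2nn : 0 ≤ ∫ x, ‖u x‖ ^ 2 := integral_nonneg fun x => by positivity
  have hA : ((∫ x, ‖w0 x‖ ^ 4) ^ ((1:ℝ)/4)) ^ 4 = ∫ x, ‖w0 x‖ ^ 4 := by
    rw [← Real.rpow_natCast ((∫ x, ‖w0 x‖ ^ 4) ^ ((1:ℝ)/4)) 4,
      ← Real.rpow_mul hw4nn]
    norm_num
  have hA2 : ((∫ x, ‖u x‖ ^ 2) ^ ((1:ℝ)/2)) ^ 2 = ∫ x, ‖u x‖ ^ 2 := by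
    rw [← Real.rpow_natCast ((∫ x, ‖u x‖ ^ 2) ^ ((1:ℝ)/2)) 2,
      ← Real.rpow_mul hu2nn]
    norm_num
  have hgi : ∫ x, g x = -(r / (2 * lam)) * ((∫ x, ‖w0 x‖ ^ 4) + ∫ x, ‖u x‖ ^ 2) := by
    rw [hg]
    rw [integral_const_mul, integral_add hw4 hu2']
  rw [hA, hA2, ← hgi]
  -- split on integrability of the inner product
  by_cases hf : Integrable (fun x => ⟪B u x, u x⟫) (volume : Measure Ω)
  · exact integral_mono hgint hf hpt
  · rw [integral_undef hf]
    apply integral_nonpos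
    intro x
    have h1 : 0 ≤ ‖w0 x‖ ^ 4 + ‖u x‖ ^ 2 := by positivity
    have h2 : 0 ≤ r / (2 * lam) := by positivity
    simp only [hg, Pi.zero_apply]
    nlinarith
end

section
/- Continuous dependence of the tidal state on the control: if (u_{U*+τU}, ξ_{U*+τU}) and (u_{U*}, ξ_{U*}) are weak solutions of the controlled tidal system with controls U*+τU and U* and the same initial data, then sup_{t∈[0,T]}[‖u_{U*+τU}(t) − u_{U*}(t)‖²_{L²} + ‖ξ_{U*+τU}(t) − ξ_{U*}(t)‖²_{L²}] + α∫₀ᵀ‖∇(u_{U*+τU} − u_{U*})(t)‖²_{L²} dt ≤ (4τ²/α)(∫₀ᵀ‖U(t)‖²_{H⁻¹} dt) · e^{[(4/α)(2+μ²)+M]T}. -/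
open MeasureTheory Asymptotics Filter
open scoped RealInnerProductSpace Topology

section tidalHelpers
lemma cont_primitive_hasDerivAt {f : ℝ → ℝ} (hf : Continuous f) (a b : ℝ) :
    HasDerivAt (fun u => ∫ x in a..u, f x) (f b) b :=
  intervalIntegral.integral_hasDerivAt_right (hf.intervalIntegrable a b)
    (hf.stronglyMeasurableAtFilter _ _) hf.continuousAt
lemma hasDerivAt_norm_sq_pairing {V H : Type*}
    [NormedAddCommGroup V] [NormedSpace ℝ V]
    [NormedAddCommGroup H] [InnerProductSpace ℝ H]
    (ι : V →L[ℝ] H) (jH : H →L[ℝ] (V →L[ℝ] ℝ))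
    (hjH : ∀ (x : H) (v : V), jH x v = ⟪x, ι v⟫)
    (w : ℝ → V) (D : V →L[ℝ] ℝ) (t : ℝ)
    (hw : ContinuousAt w t)
    (hg : HasDerivAt (fun s => jH (ι (w s))) D t) :
    HasDerivAt (fun s => ‖ι (w s)‖ ^ 2) (2 * D (w t)) t := by
  rw [hasDerivAt_iff_isLittleO] at hg ⊢
  have key : ∀ s : ℝ, ‖ι (w s)‖ ^ 2 - ‖ι (w t)‖ ^ 2 - (s - t) • (2 * D (w t)) =
      (jH (ι (w s)) - jH (ι (w t)) - (s - t) • D) (w s + w t)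
        + (s - t) * (D (w s + w t) - D (w t + w t)) := by
    intro s
    have e1 : (jH (ι (w s)) - jH (ι (w t)) - (s - t) • D) (w s + w t)
        = jH (ι (w s)) (w s + w t) - jH (ι (w t)) (w s + w t) - (s - t) * D (w s + w t) := by
      simp [ContinuousLinearMap.sub_apply, ContinuousLinearMap.smul_apply, smul_eq_mul]
    have e2 : jH (ι (w s)) (w s + w t) - jH (ι (w t)) (w s + w t)
        = ‖ι (w s)‖ ^ 2 - ‖ι (w t)‖ ^ 2 := by
      rw [hjH, hjH, map_add, ← real_inner_self_eq_norm_sq, ← real_inner_self_eq_norm_sq]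
      rw [inner_add_right, inner_add_right]
      rw [real_inner_comm (ι (w t)) (ι (w s))]
      ring
    have e3 : D (w t + w t) = 2 * D (w t) := by
      rw [map_add]; ring
    rw [e1, e2, e3]
    simp only [smul_eq_mul]
    ring
  have h1 : (fun s => (jH (ι (w s)) - jH (ι (w t)) - (s - t) • D) (w s + w t))
      =o[𝓝 t] fun s => s - t := by
    have hb : (fun s => ‖w s + w t‖) =O[𝓝 t] (fun _ => (1:ℝ)) :=
      (((hw.add continuousAt_const).norm).tendsto).isBigO_one ℝ
    have happ : (fun s => (jH (ι (w s)) - jH (ι (w t)) - (s - t) • D) (w s + w t))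
        =O[𝓝 t] (fun s => ‖jH (ι (w s)) - jH (ι (w t)) - (s - t) • D‖ * ‖w s + w t‖) := by
      refine IsBigO.of_bound 1 (Eventually.of_forall fun s => ?_)
      have hle := ContinuousLinearMap.le_opNorm
        (jH (ι (w s)) - jH (ι (w t)) - (s - t) • D) (w s + w t)
      rw [one_mul, Real.norm_eq_abs (_ * _),
        abs_of_nonneg (mul_nonneg (norm_nonneg _) (norm_nonneg _))]
      exact hle
    have hmul := (hg.norm_left).mul_isBigO hb
    refine happ.trans_isLittleO (hmul.congr' (Eventually.of_forall fun s => rfl)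
      (Eventually.of_forall fun s => by simp))
  have h2 : (fun s => (s - t) * (D (w s + w t) - D (w t + w t))) =o[𝓝 t] fun s => s - t := by
    have hz : (fun s => D (w s + w t) - D (w t + w t)) =o[𝓝 t] (fun _ => (1:ℝ)) := by
      rw [isLittleO_one_iff]
      have : ContinuousAt (fun s => D (w s + w t)) t :=
        D.continuous.continuousAt.comp (hw.add continuousAt_const)
      simpa only [sub_self] using this.tendsto.sub
        (tendsto_const_nhds : Tendsto (fun _ : ℝ => D (w t + w t)) (𝓝 t) _)
    have := (isBigO_refl (fun s => s - t) (𝓝 t)).mul_isLittleO hz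
    exact this.congr' (Eventually.of_forall fun s => rfl) (Eventually.of_forall fun s => by simp)
  exact (h1.add h2).congr' (Eventually.of_forall fun s => (key s).symm)
    (Eventually.of_forall fun s => rfl)


lemma young1' (α τ a b : ℝ) (hα : 0 < α) :
    2 * (τ * (b * a)) ≤ 3 * α / 4 * a ^ 2 + 4 * τ ^ 2 / (3 * α) * b ^ 2 := by
  rw [← sub_nonneg]
  have hid : (3 * α) * (3 * α / 4 * a ^ 2 + 4 * τ ^ 2 / (3 * α) * b ^ 2 - 2 * (τ * (b * a)))
      = (3 * α / 2 * a - 2 * τ * b) ^ 2 := by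
    field_simp; ring
  nlinarith [sq_nonneg (3 * α / 2 * a - 2 * τ * b), hid]

lemma young2' (α s2 c a : ℝ) (hα : 0 < α) (hs2 : s2 ^ 2 = 2) :
    2 * (s2 * c * a) ≤ α / 4 * a ^ 2 + 8 / α * c ^ 2 := by
  rw [← sub_nonneg]
  have hid : α * (α / 4 * a ^ 2 + 8 / α * c ^ 2 - 2 * (s2 * c * a))
      = (α / 2 * a - 2 * s2 * c) ^ 2 + (8 - 4 * s2 ^ 2) * c ^ 2 := by
    field_simp; ring
  rw [hs2] at hid
  nlinarith [sq_nonneg (α / 2 * a - 2 * s2 * c), hid]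

lemma young3' (α s2 μ a c : ℝ) (hα : 0 < α) (hs2 : s2 ^ 2 = 2) :
    2 * (s2 * μ * a * c) ≤ α / 2 * a ^ 2 + 4 * μ ^ 2 / α * c ^ 2 := by
  rw [← sub_nonneg]
  have hid : (2 * α) * (α / 2 * a ^ 2 + 4 * μ ^ 2 / α * c ^ 2 - 2 * (s2 * μ * a * c))
      = (α * a - 2 * s2 * μ * c) ^ 2 + (8 - 4 * s2 ^ 2) * μ ^ 2 * c ^ 2 := by
    field_simp; ring
  rw [hs2] at hid
  nlinarith [sq_nonneg (α * a - 2 * s2 * μ * c), hid]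

lemma young4' (M d c : ℝ) (hM : 0 ≤ M) :
    2 * (M * d * c) ≤ M * d ^ 2 + M * c ^ 2 := by
  nlinarith [sq_nonneg (d - c), hM]

lemma kphi_expand (α μ M c d : ℝ) (hα : 0 < α) :
    ((4 / α) * (2 + μ ^ 2) + M) * (d ^ 2 + c ^ 2)
      = 8 / α * c ^ 2 + 4 * μ ^ 2 / α * c ^ 2 + M * c ^ 2
        + M * d ^ 2 + (4 / α) * (2 + μ ^ 2) * d ^ 2 := by
  field_simp; ring

end tidalHelpers

set_option maxHeartbeats 2000000 in
/-- Continuous dependence of the tidal state on the control, in the Gelfand-triple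
setting `V = H₀¹ ⊂ H = L² ⊂ V →L[ℝ] ℝ = H⁻¹`, `Q = L²(Ω)`.  If `(u₁,ξ₁)` and
`(u₂,ξ₂)` are weak solutions of the controlled tidal system with controls
`U* + τU` and `U*` and the same initial data, then for all `t ∈ [0,T]`,
`‖u₁(t) − u₂(t)‖²_{L²} + ‖ξ₁(t) − ξ₂(t)‖²_{L²} + α∫₀ᵀ‖∇(u₁−u₂)‖² ≤
  (4τ²/α)(∫₀ᵀ‖U‖²_{H⁻¹}) e^{[(4/α)(2+μ²)+M]T}`. -/
theorem tidal_continuous_dependence_on_control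
    {V H Q : Type*}
    [NormedAddCommGroup V] [NormedSpace ℝ V]
    [NormedAddCommGroup H] [InnerProductSpace ℝ H]
    [NormedAddCommGroup Q] [InnerProductSpace ℝ Q]
    (α μ M T τ : ℝ) (hα : 0 < α) (hμ : 0 ≤ μ) (hM : 0 ≤ M) (hT : 0 < T)
    (hτ : τ ∈ Set.Icc (0:ℝ) 1)
    (ι : V →L[ℝ] H) (jH : H →L[ℝ] (V →L[ℝ] ℝ))
    (hjH : ∀ (x : H) (v : V), jH x v = ⟪x, ι v⟫)
    (A : V →L[ℝ] (V →L[ℝ] ℝ)) (hA : ∀ v, A v v = α * ‖v‖ ^ 2)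
    -- the monotone tidal nonlinearity B(u) = γ|u+w⁰|(u+w⁰)
    (B : V → (V →L[ℝ] ℝ)) (hB : ∀ u v : V, 0 ≤ (B u - B v) (u - v))
    (grad : Q →L[ℝ] (V →L[ℝ] ℝ))
    (hgrad : ∀ q v, |grad q v| ≤ Real.sqrt 2 * ‖q‖ * ‖v‖)
    (divh : V →L[ℝ] Q)
    (hdivh : ∀ v, ‖divh v‖ ≤ Real.sqrt 2 * μ * ‖v‖ + M * ‖ι v‖)
    (f Ust U : ℝ → (V →L[ℝ] ℝ))
    (u1 u2 : ℝ → V) (ξ1 ξ2 : ℝ → Q)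
    (heq1 : ∀ t ∈ Set.Icc (0:ℝ) T,
      HasDerivAt (fun s => jH (ι (u1 s)))
        (f t + Ust t + τ • U t - A (u1 t) - B (u1 t) - grad (ξ1 t)) t)
    (heq1' : ∀ t ∈ Set.Icc (0:ℝ) T, HasDerivAt ξ1 (-(divh (u1 t))) t)
    (heq2 : ∀ t ∈ Set.Icc (0:ℝ) T,
      HasDerivAt (fun s => jH (ι (u2 s)))
        (f t + Ust t - A (u2 t) - B (u2 t) - grad (ξ2 t)) t)
    (heq2' : ∀ t ∈ Set.Icc (0:ℝ) T, HasDerivAt ξ2 (-(divh (u2 t))) t)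
    (hinit_u : u1 0 = u2 0) (hinit_ξ : ξ1 0 = ξ2 0)
    (hu1c : Continuous u1) (hu2c : Continuous u2) (hUc : Continuous U) :
    ∀ t ∈ Set.Icc (0:ℝ) T,
      ‖ι (u1 t - u2 t)‖ ^ 2 + ‖ξ1 t - ξ2 t‖ ^ 2
        + α * ∫ s in (0:ℝ)..T, ‖u1 s - u2 s‖ ^ 2 ≤
      ((4 * τ ^ 2 / α) * ∫ s in (0:ℝ)..T, ‖U s‖ ^ 2)
        * Real.exp (((4 / α) * (2 + μ ^ 2) + M) * T) := by
  intro t ht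
  -- abbreviations
  set w : ℝ → V := fun s => u1 s - u2 s with hw
  set η : ℝ → Q := fun s => ξ1 s - ξ2 s with hη
  set K : ℝ := (4 / α) * (2 + μ ^ 2) + M with hK
  set φ : ℝ → ℝ := fun s => ‖ι (w s)‖ ^ 2 + ‖η s‖ ^ 2 with hφ
  have hwc : Continuous w := hu1c.sub hu2c
  have hKnn : 0 ≤ K := by
    rw [hK]
    have : 0 ≤ (4 / α) * (2 + μ ^ 2) := by positivity
    linarith
  set Dop : ℝ → (V →L[ℝ] ℝ) :=
    fun s => τ • U s - A (w s) - (B (u1 s) - B (u2 s)) - grad (η s) with hDop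
  -- derivative of the dual pairing difference
  have hgd : ∀ s ∈ Set.Icc (0:ℝ) T, HasDerivAt (fun r => jH (ι (w r))) (Dop s) s := by
    intro s hs
    have h := (heq1 s hs).sub (heq2 s hs)
    have hfun : (fun r => jH (ι (w r)))
        = fun r => jH (ι (u1 r)) - jH (ι (u2 r)) := by
      funext r; simp [hw, map_sub]
    rw [hfun]
    refine h.congr_deriv ?_
    simp only [hDop, hw, hη, map_sub]
    abel
  -- derivative of η
  have hηd : ∀ s ∈ Set.Icc (0:ℝ) T, HasDerivAt η (-(divh (w s))) s := by
    intro s hs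
    have h := (heq1' s hs).sub (heq2' s hs)
    refine h.congr_deriv ?_
    simp [hw, map_sub]
    abel
  -- the key lemma for the H-norm square (proved separately)
  have hF : ∀ s ∈ Set.Icc (0:ℝ) T,
      HasDerivAt (fun r => ‖ι (w r)‖ ^ 2) (2 * (Dop s) (w s)) s := by
    intro s hs
    exact hasDerivAt_norm_sq_pairing ι jH hjH w (Dop s) s hwc.continuousAt (hgd s hs)
  have hG : ∀ s ∈ Set.Icc (0:ℝ) T,
      HasDerivAt (fun r => ‖η r‖ ^ 2)
        (⟪η s, -(divh (w s))⟫ + ⟪-(divh (w s)), η s⟫) s := by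
    intro s hs
    have h := HasDerivAt.inner ℝ (hηd s hs) (hηd s hs)
    have hfun : (fun r => ‖η r‖ ^ 2) = fun r => ⟪η r, η r⟫ := by
      funext r; exact (real_inner_self_eq_norm_sq (η r)).symm
    rw [hfun]
    exact h
  have hφderiv : ∀ s ∈ Set.Icc (0:ℝ) T, HasDerivAt φ
      (2 * (Dop s) (w s) + (⟪η s, -(divh (w s))⟫ + ⟪-(divh (w s)), η s⟫)) s := by
    intro s hs
    exact (hF s hs).add (hG s hs)
  set s2 : ℝ := Real.sqrt 2 with hs2def
  have hs2 : s2 ^ 2 = 2 := Real.sq_sqrt (by norm_num)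
  have hs2nn : 0 ≤ s2 := Real.sqrt_nonneg 2
  set g : ℝ → ℝ := fun s => 4 * τ ^ 2 / (3 * α) * ‖U s‖ ^ 2 with hg
  have hgnn : ∀ s, 0 ≤ g s := by intro s; rw [hg]; positivity
  clear_value w η K φ Dop g s2
  have hbound : ∀ s ∈ Set.Icc (0:ℝ) T,
      2 * (Dop s) (w s) + (⟪η s, -(divh (w s))⟫ + ⟪-(divh (w s)), η s⟫)
        ≤ -(α / 2) * ‖w s‖ ^ 2 + g s + K * φ s := by
    intro s hs
    have hDw : (Dop s) (w s) = τ * (U s (w s)) - α * ‖w s‖ ^ 2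
        - (B (u1 s) - B (u2 s)) (w s) - (grad (η s)) (w s) := by
      simp only [hDop, ContinuousLinearMap.sub_apply, ContinuousLinearMap.smul_apply,
        ContinuousLinearMap.coe_sub', Pi.sub_apply, smul_eq_mul, hA]
    have hBnn : 0 ≤ (B (u1 s) - B (u2 s)) (w s) := by
      simp only [hw]; exact hB (u1 s) (u2 s)
    have hUb : τ * (U s (w s)) ≤ τ * (‖U s‖ * ‖w s‖) := by
      refine mul_le_mul_of_nonneg_left ?_ hτ.1
      exact le_trans (le_abs_self _) (by simpa [Real.norm_eq_abs] using (U s).le_opNorm (w s))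
    have hgr : -((grad (η s)) (w s)) ≤ s2 * ‖η s‖ * ‖w s‖ := by
      have h1 := hgrad (η s) (w s)
      have h2 : -((grad (η s)) (w s)) ≤ |(grad (η s)) (w s)| := neg_le_abs _
      calc -((grad (η s)) (w s)) ≤ |(grad (η s)) (w s)| := h2
        _ ≤ s2 * ‖η s‖ * ‖w s‖ := h1
    have step1 : (Dop s) (w s)
        ≤ τ * (‖U s‖ * ‖w s‖) - α * ‖w s‖ ^ 2 + s2 * ‖η s‖ * ‖w s‖ := by
      rw [hDw]; linarith
    have hdv : ‖divh (w s)‖ ≤ s2 * μ * ‖w s‖ + M * ‖ι (w s)‖ := hdivh (w s)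
    have step2 : ⟪η s, -(divh (w s))⟫ + ⟪-(divh (w s)), η s⟫
        ≤ 2 * (s2 * μ * ‖w s‖ * ‖η s‖) + 2 * (M * ‖ι (w s)‖ * ‖η s‖) := by
      have h1 : ⟪η s, -(divh (w s))⟫ ≤ ‖η s‖ * ‖divh (w s)‖ := by
        simpa [norm_neg] using real_inner_le_norm (η s) (-(divh (w s)))
      have h2 : ⟪-(divh (w s)), η s⟫ ≤ ‖divh (w s)‖ * ‖η s‖ := by
        simpa [norm_neg] using real_inner_le_norm (-(divh (w s))) (η s)
      nlinarith [norm_nonneg (η s), norm_nonneg (divh (w s))]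
    -- Young inequalities
    have Y1 := young1' α τ ‖w s‖ ‖U s‖ hα
    have Y2 := young2' α s2 ‖η s‖ ‖w s‖ hα hs2
    have Y3 := young3' α s2 μ ‖w s‖ ‖η s‖ hα hs2
    have Y4 := young4' M ‖ι (w s)‖ ‖η s‖ hM
    have hexp : K * φ s = 8 / α * ‖η s‖ ^ 2 + 4 * μ ^ 2 / α * ‖η s‖ ^ 2 + M * ‖η s‖ ^ 2
        + M * ‖ι (w s)‖ ^ 2 + (4 / α) * (2 + μ ^ 2) * ‖ι (w s)‖ ^ 2 := by
      rw [hK, hφ]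
      exact kphi_expand α μ M ‖η s‖ ‖ι (w s)‖ hα
    have hdnn : 0 ≤ (4 / α) * (2 + μ ^ 2) * ‖ι (w s)‖ ^ 2 := by positivity
    rw [hg]
    linarith
  -- continuity of integrands
  have hgc : Continuous g := by
    rw [hg]; exact continuous_const.mul (hUc.norm.pow 2)
  have hcw2 : Continuous (fun s : ℝ => Real.exp (-K * s) * ‖w s‖ ^ 2) :=
    (Real.continuous_exp.comp (continuous_const.mul continuous_id)).mul (hwc.norm.pow 2)
  have hcg : Continuous (fun s : ℝ => Real.exp (-K * s) * g s) :=
    (Real.continuous_exp.comp (continuous_const.mul continuous_id)).mul hgc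
  set W : ℝ → ℝ := fun r => ∫ s in (0:ℝ)..r, Real.exp (-K * s) * ‖w s‖ ^ 2 with hWdef
  set Gg : ℝ → ℝ := fun r => ∫ s in (0:ℝ)..r, Real.exp (-K * s) * g s with hGgdef
  have hWd : ∀ s : ℝ, HasDerivAt W (Real.exp (-K * s) * ‖w s‖ ^ 2) s := by
    intro s; rw [hWdef]; exact cont_primitive_hasDerivAt hcw2 0 s
  have hGgd : ∀ s : ℝ, HasDerivAt Gg (Real.exp (-K * s) * g s) s := by
    intro s; rw [hGgdef]; exact cont_primitive_hasDerivAt hcg 0 s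
  have hW0 : W 0 = 0 := by rw [hWdef]; exact intervalIntegral.integral_same
  have hGg0 : Gg 0 = 0 := by rw [hGgdef]; exact intervalIntegral.integral_same
  clear_value W Gg
  have hexpD : ∀ s : ℝ, HasDerivAt (fun r => Real.exp (-K * r)) (-K * Real.exp (-K * s)) s := by
    intro s
    have h1 : HasDerivAt (fun r : ℝ => -K * r) (-K) s := by
      simpa using (hasDerivAt_id s).const_mul (-K)
    simpa [mul_comm] using h1.exp
  set Z : ℝ → ℝ := fun r => Gg r - (Real.exp (-K * r) * φ r + α / 2 * W r) with hZdef
  have hZd : ∀ s ∈ Set.Icc (0:ℝ) T, HasDerivAt Z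
      (Real.exp (-K * s) * g s - ((-K * Real.exp (-K * s) * φ s
        + Real.exp (-K * s) * (2 * (Dop s) (w s)
          + (⟪η s, -(divh (w s))⟫ + ⟪-(divh (w s)), η s⟫)))
        + α / 2 * (Real.exp (-K * s) * ‖w s‖ ^ 2))) s := by
    intro s hs
    rw [hZdef]
    exact (hGgd s).sub (((hexpD s).mul (hφderiv s hs)).add ((hWd s).const_mul (α / 2)))
  have hZdnn : ∀ s ∈ Set.Icc (0:ℝ) T,
      0 ≤ Real.exp (-K * s) * g s - ((-K * Real.exp (-K * s) * φ s
        + Real.exp (-K * s) * (2 * (Dop s) (w s)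
          + (⟪η s, -(divh (w s))⟫ + ⟪-(divh (w s)), η s⟫)))
        + α / 2 * (Real.exp (-K * s) * ‖w s‖ ^ 2)) := by
    intro s hs
    have hb := hbound s hs
    have h0 : 0 ≤ Real.exp (-K * s) * ((-(α / 2) * ‖w s‖ ^ 2 + g s + K * φ s)
        - (2 * (Dop s) (w s) + (⟪η s, -(divh (w s))⟫ + ⟪-(divh (w s)), η s⟫))
        + (α / 2 * ‖w s‖ ^ 2 - α / 2 * ‖w s‖ ^ 2)) := by
      apply mul_nonneg (Real.exp_pos _).le
      linarith
    calc (0:ℝ) ≤ _ := h0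
      _ = _ := by ring
  clear_value Z
  have hZmono : MonotoneOn Z (Set.Icc (0:ℝ) T) := by
    apply monotoneOn_of_deriv_nonneg (convex_Icc 0 T)
    · intro s hs
      exact ((hZd s hs).continuousAt).continuousWithinAt
    · intro s hs
      rw [interior_Icc] at hs
      exact ((hZd s (Set.Ioo_subset_Icc_self hs)).differentiableAt).differentiableWithinAt
    · intro s hs
      rw [interior_Icc] at hs
      rw [(hZd s (Set.Ioo_subset_Icc_self hs)).deriv]
      exact hZdnn s (Set.Ioo_subset_Icc_self hs)
  have hφ0 : φ 0 = 0 := by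
    rw [hφ, hw, hη]
    simp [hinit_u, hinit_ξ]
  have hZ0 : Z 0 = 0 := by
    simp only [hZdef, hφ0, hW0, hGg0]
    simp
  -- consequences of monotonicity
  have hρ : ∀ r ∈ Set.Icc (0:ℝ) T,
      Real.exp (-K * r) * φ r + α / 2 * W r ≤ Gg r := by
    intro r hr
    have h := hZmono (Set.left_mem_Icc.2 hT.le) hr hr.1
    rw [hZ0] at h
    simp only [hZdef] at h
    linarith
    -- integral bounds and conclusion
  have hIntU : 0 ≤ ∫ s in (0:ℝ)..T, ‖U s‖ ^ 2 :=
    intervalIntegral.integral_nonneg hT.le (fun s _ => sq_nonneg _)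
  set GU : ℝ := ∫ s in (0:ℝ)..T, ‖U s‖ ^ 2 with hGU
  clear_value GU
  have hGgT : Gg T ≤ 4 * τ ^ 2 / (3 * α) * GU := by
    have h1 : Gg T ≤ ∫ s in (0:ℝ)..T, g s := by
      simp only [hGgdef]
      apply intervalIntegral.integral_mono_on hT.le (hcg.intervalIntegrable (μ := volume) 0 T)
        (hgc.intervalIntegrable (μ := volume) 0 T)
      intro s hs
      have he : Real.exp (-K * s) ≤ 1 := by
        rw [Real.exp_le_one_iff]
        nlinarith [hKnn, hs.1]
      exact mul_le_of_le_one_left (hgnn s) he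
    have h2 : (∫ s in (0:ℝ)..T, g s) = 4 * τ ^ 2 / (3 * α) * GU := by
      simp only [hg]
      rw [intervalIntegral.integral_const_mul, hGU]
    linarith
  have hGgt : Gg t ≤ Gg T := by
    have hsplit := intervalIntegral.integral_add_adjacent_intervals
      (hcg.intervalIntegrable (μ := volume) 0 t) (hcg.intervalIntegrable (μ := volume) t T)
    have hnn : 0 ≤ ∫ s in t..T, Real.exp (-K * s) * g s :=
      intervalIntegral.integral_nonneg ht.2
        (fun s _ => mul_nonneg (Real.exp_pos _).le (hgnn s))
    simp only [hGgdef]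
    linarith [hsplit, hnn]
  have hWnn : ∀ r, 0 ≤ r → 0 ≤ W r := by
    intro r hr
    simp only [hWdef]
    exact intervalIntegral.integral_nonneg hr
      (fun s _ => mul_nonneg (Real.exp_pos _).le (sq_nonneg _))
  have hφnn : ∀ r, 0 ≤ φ r := by intro r; rw [hφ]; positivity
  set C3 : ℝ := 4 * τ ^ 2 / (3 * α) * GU with hC3
  clear_value C3
  have hC3nn : 0 ≤ C3 := by
    rw [hC3]
    exact mul_nonneg (by positivity) hIntU
  have hφt : φ t ≤ Real.exp (K * T) * C3 := by
    have h1 := hρ t ht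
    have h2 : Real.exp (-K * t) * φ t ≤ C3 := by
      have h0 := hWnn t ht.1
      have hW2 : 0 ≤ α / 2 * W t := mul_nonneg (by linarith) h0
      rw [hC3]
      linarith [hGgt, hGgT]
    have h3 : φ t = Real.exp (K * t) * (Real.exp (-K * t) * φ t) := by
      rw [← mul_assoc, ← Real.exp_add]
      simp
    rw [h3]
    have h4 : Real.exp (K * t) * (Real.exp (-K * t) * φ t) ≤ Real.exp (K * t) * C3 :=
      mul_le_mul_of_nonneg_left h2 (Real.exp_pos _).le
    have h5 : Real.exp (K * t) * C3 ≤ Real.exp (K * T) * C3 :=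
      mul_le_mul_of_nonneg_right
        (Real.exp_le_exp.mpr (mul_le_mul_of_nonneg_left ht.2 hKnn)) hC3nn
    linarith
  have hWT : α * W T ≤ 2 * C3 := by
    have h1 := hρ T (Set.right_mem_Icc.2 hT.le)
    have h2 : 0 ≤ Real.exp (-K * T) * φ T := mul_nonneg (Real.exp_pos _).le (hφnn T)
    rw [hC3]
    linarith [hGgT, h1]
  have hdiss : α * (∫ s in (0:ℝ)..T, ‖w s‖ ^ 2) ≤ Real.exp (K * T) * (2 * C3) := by
    have hptwise : ∀ s ∈ Set.Icc (0:ℝ) T,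
        ‖w s‖ ^ 2 ≤ Real.exp (K * T) * (Real.exp (-K * s) * ‖w s‖ ^ 2) := by
      intro s hs
      have hKTs : 0 ≤ K * (T - s) := mul_nonneg hKnn (by linarith [hs.2])
      have h1 : 1 ≤ Real.exp (K * T) * Real.exp (-K * s) := by
        rw [← Real.exp_add]
        apply Real.one_le_exp
        nlinarith [hKTs]
      nlinarith [sq_nonneg ‖w s‖, h1]
    have h2 : (∫ s in (0:ℝ)..T, ‖w s‖ ^ 2)
        ≤ ∫ s in (0:ℝ)..T, Real.exp (K * T) * (Real.exp (-K * s) * ‖w s‖ ^ 2) :=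
      intervalIntegral.integral_mono_on hT.le
        ((hwc.norm.pow 2).intervalIntegrable (μ := volume) 0 T)
        ((continuous_const.mul hcw2).intervalIntegrable (μ := volume) 0 T) hptwise
    have h3 : (∫ s in (0:ℝ)..T, Real.exp (K * T) * (Real.exp (-K * s) * ‖w s‖ ^ 2))
        = Real.exp (K * T) * W T := by
      rw [intervalIntegral.integral_const_mul]
      simp only [hWdef]
    have h4 : α * (∫ s in (0:ℝ)..T, ‖w s‖ ^ 2) ≤ α * (Real.exp (K * T) * W T) :=
      mul_le_mul_of_nonneg_left (h2.trans_eq h3) hα.le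
    have h6 : Real.exp (K * T) * (α * W T) ≤ Real.exp (K * T) * (2 * C3) :=
      mul_le_mul_of_nonneg_left hWT (Real.exp_pos _).le
    nlinarith [h4, h6]
  -- finish
  have hwgoal : ∀ s, u1 s - u2 s = w s := fun s => by rw [hw]
  have hηgoal : ∀ s, ξ1 s - ξ2 s = η s := fun s => by rw [hη]
  simp only [hwgoal, hηgoal]
  have hfin : Real.exp (K * T) * C3 + Real.exp (K * T) * (2 * C3)
      = 4 * τ ^ 2 / α * GU * Real.exp (K * T) := by
    rw [hC3]
    field_simp
    ring
  have hφteq : φ t = ‖ι (w t)‖ ^ 2 + ‖η t‖ ^ 2 := by rw [hφ]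
  linarith [hφt, hdiss, hfin]
end
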